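/- Let α > -1, let n ≥ 1 be an integer, let μ, η ∈ ℂ with |μ| = |η| = 1, let φ : 𝔻 → 𝔻 be analytic, and let ψ be analytic on 𝔻 and not identically zero. Suppose that for all z, w ∈ 𝔻, μ·p·ψ(z)·(ηw)^n / (1 - ηw·φ(z))^{n+α+2} = μ·p·ψ(w)·(ηz)^n / (1 - η·φ(w)·z)^{n+α+2}. Then, with b = φ(0) ∈ 𝔻, there exist a, c ∈ ℂ such that for all z ∈ 𝔻, ψ(z) = a·z^n / (1 - ηbz)^{n+α+2} and φ(z) = b + cz/(1 - ηbz). -/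

import Mathlib

open ComplexConjugate

private lemma aux_ne {x : ℂ} (h : 0 < x.re) : x ≠ 0 := by
  intro h0; rw [h0] at h; simp at h

private lemma aux_re {u : ℂ} (h : ‖u‖ < 1) : 0 < (1 - u).re := by
  have h2 : u.re ≤ ‖u‖ := Complex.re_le_norm u
  simp only [Complex.sub_re, Complex.one_re]
  linarith

private lemma aux_slit {x : ℂ} (h : 0 < x.re) : x ∈ Complex.slitPlane :=
  Or.inl h

private lemma aux_log_mul {x y : ℂ} (hx : 0 < x.re) (hy : 0 < y.re) :
    Complex.log (x * y) = Complex.log x + Complex.log y := by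
  have hπ := Real.pi_pos
  have hax : |Complex.arg x| < Real.pi / 2 := Complex.abs_arg_lt_pi_div_two_iff.mpr (Or.inl hx)
  have hay : |Complex.arg y| < Real.pi / 2 := Complex.abs_arg_lt_pi_div_two_iff.mpr (Or.inl hy)
  rw [abs_lt] at hax hay
  exact Complex.log_mul (aux_ne hx) (aux_ne hy)
    ⟨by linarith [hax.1, hay.1], by linarith [hax.2, hay.2]⟩

private lemma aux_cpow_ne {x : ℂ} (hx : x ≠ 0) (s : ℂ) : x ^ s ≠ 0 := by
  rw [Complex.cpow_def_of_ne_zero hx]; exact Complex.exp_ne_zero _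

private lemma aux_pow_mul (s : ℂ) {x y u v : ℂ} (hx : 0 < x.re) (hy : 0 < y.re)
    (hu : 0 < u.re) (hv : 0 < v.re) (h : x * y = u * v) :
    x ^ s * y ^ s = u ^ s * v ^ s := by
  rw [Complex.cpow_def_of_ne_zero (aux_ne hx), Complex.cpow_def_of_ne_zero (aux_ne hy),
    Complex.cpow_def_of_ne_zero (aux_ne hu), Complex.cpow_def_of_ne_zero (aux_ne hv),
    ← Complex.exp_add, ← Complex.exp_add, ← add_mul, ← add_mul,
    ← aux_log_mul hx hy, ← aux_log_mul hu hv, h]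

/-- Theorem 2.1 (forward direction): if the reproducing-kernel identity for
complex symmetry of `D_{n,ψ,φ}` with conjugation `C_{μ,η}` holds on the
weighted Bergman space `A²_α`, then `ψ` and `φ` have the stated forms. -/
theorem stmt0 (α : ℝ) (hα : -1 < α) (n : ℕ) (hn : 1 ≤ n) (μ η : ℂ)
    (hμ : ‖μ‖ = 1) (hη : ‖η‖ = 1)
    (φ ψ : ℂ → ℂ)
    (hφ : DifferentiableOn ℂ φ (Metric.ball (0 : ℂ) 1))
    (hφmap : ∀ z ∈ Metric.ball (0 : ℂ) 1, φ z ∈ Metric.ball (0 : ℂ) 1)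
    (hψ : DifferentiableOn ℂ ψ (Metric.ball (0 : ℂ) 1))
    (hψne : ∃ z ∈ Metric.ball (0 : ℂ) 1, ψ z ≠ 0)
    (p : ℂ) (hp : p = ∏ j ∈ Finset.range n, ((α : ℂ) + 2 + j))
    (heq : ∀ z ∈ Metric.ball (0 : ℂ) 1, ∀ w ∈ Metric.ball (0 : ℂ) 1,
      μ * p * ψ z * (η * w) ^ n / (1 - η * w * φ z) ^ ((n : ℂ) + α + 2)
        = μ * p * ψ w * (η * z) ^ n / (1 - η * φ w * z) ^ ((n : ℂ) + α + 2)) :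
    ∃ a c : ℂ, ∀ z ∈ Metric.ball (0 : ℂ) 1,
      ψ z = a * z ^ n / (1 - η * φ 0 * z) ^ ((n : ℂ) + α + 2) ∧
      φ z = φ 0 + c * z / (1 - η * φ 0 * z) := by
  have hπ := Real.pi_pos
  set s : ℂ := (n : ℂ) + α + 2 with hs
  have h0mem : (0 : ℂ) ∈ Metric.ball (0 : ℂ) 1 := Metric.mem_ball_self one_pos
  have hball : ∀ z : ℂ, z ∈ Metric.ball (0 : ℂ) 1 → ‖z‖ < 1 := by
    intro z hz; rwa [mem_ball_zero_iff] at hz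
  have hφball : ∀ w ∈ Metric.ball (0 : ℂ) 1, ‖φ w‖ < 1 :=
    fun w hw => hball _ (hφmap w hw)
  have hnn : n ≠ 0 := by omega
  have hsre : 0 < s.re := by
    have h1 : (0:ℝ) ≤ (n:ℝ) := Nat.cast_nonneg n
    have h2 : s.re = n + α + 2 := by rw [hs]; simp
    rw [h2]; linarith
  have hs0 : s ≠ 0 := aux_ne hsre
  have hμ0 : μ ≠ 0 := by intro h; rw [h] at hμ; simp at hμ
  have hη0 : η ≠ 0 := by intro h; rw [h] at hη; simp at hη
  have hp0 : p ≠ 0 := by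
    rw [hp, Finset.prod_ne_zero_iff]
    intro j hj
    apply aux_ne
    have h1 : (0:ℝ) ≤ (j:ℝ) := Nat.cast_nonneg j
    have h2 : ((α : ℂ) + 2 + j).re = α + 2 + j := by simp
    rw [h2]; linarith
  have hbase : ∀ u ∈ Metric.ball (0 : ℂ) 1, ∀ v ∈ Metric.ball (0 : ℂ) 1,
      0 < (1 - η * φ v * u).re := by
    intro u hu v hv
    apply aux_re
    have h1 : ‖η * φ v * u‖ = ‖φ v‖ * ‖u‖ := by
      rw [norm_mul, norm_mul, hη, one_mul]
    rw [h1]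
    have h2 := hφball v hv
    have h3 := hball u hu
    have h4 := norm_nonneg (φ v)
    have h5 := norm_nonneg u
    nlinarith
  have hbne : ∀ u ∈ Metric.ball (0 : ℂ) 1, ∀ v ∈ Metric.ball (0 : ℂ) 1,
      (1 - η * φ v * u) ≠ 0 := fun u hu v hv => aux_ne (hbase u hu v hv)
  have hpne : ∀ u ∈ Metric.ball (0 : ℂ) 1, ∀ v ∈ Metric.ball (0 : ℂ) 1,
      (1 - η * φ v * u) ^ s ≠ 0 := fun u hu v hv => aux_cpow_ne (hbne u hu v hv) s
  -- Step I : cross-multiplied kernel identity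
  have hI : ∀ z ∈ Metric.ball (0 : ℂ) 1, ∀ w ∈ Metric.ball (0 : ℂ) 1,
      ψ z * w ^ n * (1 - η * φ w * z) ^ s = ψ w * z ^ n * (1 - η * φ z * w) ^ s := by
    intro z hz w hw
    have h := heq z hz w hw
    rw [show (1 - η * w * φ z) = 1 - η * φ z * w by ring] at h
    rw [div_eq_div_iff (hpne w hw z hz) (hpne z hz w hw)] at h
    apply mul_left_cancel₀ (mul_ne_zero (mul_ne_zero hμ0 hp0) (pow_ne_zero n hη0))
    linear_combination h
  have hw₁ : (2 : ℂ)⁻¹ ∈ Metric.ball (0 : ℂ) 1 := by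
    rw [mem_ball_zero_iff]
    norm_num
  -- ψ 0 = 0
  have hψ00 : ψ 0 = 0 := by
    have h := hI ((2:ℂ)⁻¹) hw₁ 0 h0mem
    rw [zero_pow hnn, mul_zero, zero_mul,
      show (1 - η * φ ((2:ℂ)⁻¹) * 0) = 1 by ring, Complex.one_cpow, mul_one] at h
    rcases mul_eq_zero.mp h.symm with h2 | h2
    · exact h2
    · exact absurd h2 (pow_ne_zero _ (by norm_num))
  obtain ⟨z₀, hz₀mem, hψz₀⟩ := hψne
  have hz₀0 : z₀ ≠ 0 := by rintro rfl; exact hψz₀ hψ00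
  -- Step III : triple product identity
  have hIII : ∀ z ∈ Metric.ball (0 : ℂ) 1, z ≠ 0 → ∀ w ∈ Metric.ball (0 : ℂ) 1,
      (1 - η * φ w * z) * (1 - η * φ z₀ * w) * (1 - η * φ z * z₀)
        = (1 - η * φ z * w) * (1 - η * φ w * z₀) * (1 - η * φ z₀ * z) := by
    intro z hz hz0
    set g : ℂ → ℂ := fun w =>
      (Complex.log (1 - η * φ w * z) + Complex.log (1 - η * φ z₀ * w)
        + Complex.log (1 - η * φ z * z₀) - Complex.log (1 - η * φ z * w)
        - Complex.log (1 - η * φ w * z₀) - Complex.log (1 - η * φ z₀ * z)) * s with hg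
    have hψnz : ∀ u ∈ Metric.ball (0 : ℂ) 1, u ≠ 0 → ψ u ≠ 0 := by
      intro u hu hu0 hzero
      have h := hI u hu z₀ hz₀mem
      rw [hzero, zero_mul, zero_mul] at h
      exact (mul_ne_zero (mul_ne_zero hψz₀ (pow_ne_zero _ hu0)) (hpne z₀ hz₀mem u hu)) h.symm
    have hgval : ∀ w ∈ Metric.ball (0 : ℂ) 1, w ≠ 0 →
        ∃ k : ℤ, g w = k * (2 * Real.pi * Complex.I) := by
      intro w hw hw0
      have h1 := hI z hz w hw
      have h2 := hI w hw z₀ hz₀mem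
      have h3 := hI z₀ hz₀mem z hz
      have hII : (1 - η * φ w * z) ^ s * (1 - η * φ z₀ * w) ^ s * (1 - η * φ z * z₀) ^ s
          = (1 - η * φ z * w) ^ s * (1 - η * φ w * z₀) ^ s * (1 - η * φ z₀ * z) ^ s := by
        have hc : ψ z * ψ w * ψ z₀ * z ^ n * w ^ n * z₀ ^ n ≠ 0 :=
          mul_ne_zero (mul_ne_zero (mul_ne_zero (mul_ne_zero (mul_ne_zero
            (hψnz z hz hz0) (hψnz w hw hw0)) hψz₀) (pow_ne_zero _ hz0))
            (pow_ne_zero _ hw0)) (pow_ne_zero _ hz₀0)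
        apply mul_left_cancel₀ hc
        linear_combination (ψ w * z₀ ^ n * (1 - η * φ z₀ * w) ^ s)
            * (ψ z₀ * z ^ n * (1 - η * φ z * z₀) ^ s) * h1
          + (ψ w * z ^ n * (1 - η * φ z * w) ^ s)
            * (ψ z₀ * z ^ n * (1 - η * φ z * z₀) ^ s) * h2
          + (ψ w * z ^ n * (1 - η * φ z * w) ^ s)
            * (ψ z₀ * w ^ n * (1 - η * φ w * z₀) ^ s) * h3
      rw [Complex.cpow_def_of_ne_zero (hbne z hz w hw) s,
        Complex.cpow_def_of_ne_zero (hbne w hw z₀ hz₀mem) s,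
        Complex.cpow_def_of_ne_zero (hbne z₀ hz₀mem z hz) s,
        Complex.cpow_def_of_ne_zero (hbne w hw z hz) s,
        Complex.cpow_def_of_ne_zero (hbne z₀ hz₀mem w hw) s,
        Complex.cpow_def_of_ne_zero (hbne z hz z₀ hz₀mem) s,
        ← Complex.exp_add, ← Complex.exp_add, ← Complex.exp_add, ← Complex.exp_add] at hII
      obtain ⟨k, hk⟩ := Complex.exp_eq_exp_iff_exists_int.mp hII
      refine ⟨k, ?_⟩
      simp only [hg]
      linear_combination hk
    have hganal : AnalyticOnNhd ℂ g (Metric.ball (0 : ℂ) 1) := by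
      apply DifferentiableOn.analyticOnNhd ?_ Metric.isOpen_ball
      rw [hg]
      apply DifferentiableOn.mul_const
      apply DifferentiableOn.sub
      apply DifferentiableOn.sub
      apply DifferentiableOn.sub
      apply DifferentiableOn.add
      apply DifferentiableOn.add
      · exact DifferentiableOn.clog
          ((differentiableOn_const _).sub ((hφ.const_mul η).mul_const z))
          (fun x hx => aux_slit (hbase z hz x hx))
      · exact DifferentiableOn.clog
          ((differentiableOn_const _).sub (differentiableOn_id.const_mul (η * φ z₀)))
          (fun x hx => aux_slit (hbase x hx z₀ hz₀mem))
      · exact differentiableOn_const _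
      · exact DifferentiableOn.clog
          ((differentiableOn_const _).sub (differentiableOn_id.const_mul (η * φ z)))
          (fun x hx => aux_slit (hbase x hx z hz))
      · exact DifferentiableOn.clog
          ((differentiableOn_const _).sub ((hφ.const_mul η).mul_const z₀))
          (fun x hx => aux_slit (hbase z₀ hz₀mem x hx))
      · exact differentiableOn_const _
    have hg0 : g z₀ = 0 := by simp only [hg]; ring
    have hgev : g =ᶠ[nhds z₀] 0 := by
      have hcont : ContinuousAt g z₀ := (hganal z₀ hz₀mem).continuousAt
      have h1 : Filter.Tendsto g (nhds z₀) (nhds (g z₀)) := hcont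
      rw [hg0] at h1
      have h3 := h1 (Metric.ball_mem_nhds (0 : ℂ) (by positivity : (0:ℝ) < 2 * Real.pi))
      rw [Filter.mem_map] at h3
      have h4 : ∀ᶠ w in nhds z₀, w ∈ Metric.ball (0 : ℂ) 1 :=
        Metric.isOpen_ball.eventually_mem hz₀mem
      have h5 : ∀ᶠ w in nhds z₀, w ≠ (0 : ℂ) := eventually_ne_nhds hz₀0
      filter_upwards [h3, h4, h5] with w hw3 hw4 hw5
      obtain ⟨k, hk⟩ := hgval w hw4 hw5
      have habs : ‖g w‖ < 2 * Real.pi := by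
        have := Set.mem_preimage.mp hw3
        rwa [mem_ball_zero_iff] at this
      rw [hk] at habs
      have habs2 : ‖(k : ℂ) * (2 * (Real.pi : ℂ) * Complex.I)‖
          = |(k : ℝ)| * (2 * Real.pi) := by
        rw [norm_mul, norm_mul, norm_mul, Complex.norm_intCast, Complex.norm_I,
          Complex.norm_real, Real.norm_eq_abs, Complex.norm_two, mul_one, abs_of_pos hπ]
      rw [habs2] at habs
      have hk1 : |(k : ℝ)| < 1 := by nlinarith [abs_nonneg (k : ℝ)]
      have hk2 : ((|k| : ℤ) : ℝ) < 1 := by rw [Int.cast_abs]; exact hk1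
      have hk3 : |k| < 1 := by exact_mod_cast hk2
      have hk0 : k = 0 := by
        rcases abs_lt.mp hk3 with ⟨h1l, h1r⟩
        omega
      rw [hk, hk0]
      simp
    have hgzero := hganal.eqOn_zero_of_preconnected_of_eventuallyEq_zero
      (convex_ball (0:ℂ) 1).isPreconnected hz₀mem hgev
    intro w hw
    have h := hgzero hw
    simp only [hg, Pi.zero_apply] at h
    have hsum : Complex.log (1 - η * φ w * z) + Complex.log (1 - η * φ z₀ * w)
        + Complex.log (1 - η * φ z * z₀)
        = Complex.log (1 - η * φ z * w) + Complex.log (1 - η * φ w * z₀)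
          + Complex.log (1 - η * φ z₀ * z) := by
      rcases mul_eq_zero.mp h with h2 | h2
      · linear_combination h2
      · exact absurd h2 hs0
    have hexp := congrArg Complex.exp hsum
    rw [Complex.exp_add, Complex.exp_add, Complex.exp_add, Complex.exp_add,
      Complex.exp_log (hbne z hz w hw), Complex.exp_log (hbne w hw z₀ hz₀mem),
      Complex.exp_log (hbne z₀ hz₀mem z hz), Complex.exp_log (hbne w hw z hz),
      Complex.exp_log (hbne z₀ hz₀mem w hw), Complex.exp_log (hbne z hz z₀ hz₀mem)] at hexp
    exact hexp
  -- Step R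
  have hR : ∀ z ∈ Metric.ball (0 : ℂ) 1,
      (1 - η * φ 0 * z) * (1 - η * φ z * z₀) = (1 - η * φ 0 * z₀) * (1 - η * φ z₀ * z) := by
    intro z hz
    by_cases hz0 : z = 0
    · subst hz0; ring
    · have h := hIII z hz hz0 0 h0mem
      linear_combination h
  -- Step B
  have hB : ∀ z ∈ Metric.ball (0 : ℂ) 1, ∀ w ∈ Metric.ball (0 : ℂ) 1,
      (1 - η * φ w * z) * (1 - η * φ 0 * w) = (1 - η * φ z * w) * (1 - η * φ 0 * z) := by
    intro z hz w hw
    by_cases hz0 : z = 0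
    · subst hz0; ring
    by_cases hw0 : w = 0
    · subst hw0; ring
    have h := hIII z hz hz0 w hw
    have hz' := hR z hz
    have hw' := hR w hw
    have hc : (1 - η * φ z₀ * w) * (1 - η * φ z₀ * z) * (1 - η * φ 0 * z₀) ≠ 0 :=
      mul_ne_zero (mul_ne_zero (hbne w hw z₀ hz₀mem) (hbne z hz z₀ hz₀mem))
        (hbne z₀ hz₀mem 0 h0mem)
    apply mul_left_cancel₀ hc
    linear_combination ((1 - η * φ 0 * w) * (1 - η * φ 0 * z)) * h
      - ((1 - η * φ w * z) * (1 - η * φ 0 * w) * (1 - η * φ z₀ * w)) * hz'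
      + ((1 - η * φ z * w) * (1 - η * φ 0 * z) * (1 - η * φ z₀ * z)) * hw'
  -- conclusion
  refine ⟨ψ z₀ * (1 - η * φ 0 * z₀) ^ s / z₀ ^ n,
    η * (φ 0) ^ 2 + 2 * φ ((2:ℂ)⁻¹) - 2 * φ 0 - η * φ 0 * φ ((2:ℂ)⁻¹), ?_⟩
  intro z hz
  have hz₀n : (z₀ : ℂ) ^ n ≠ 0 := pow_ne_zero _ hz₀0
  constructor
  · -- ψ form
    by_cases hz0 : z = 0
    · subst hz0
      rw [hψ00, zero_pow hnn, mul_zero, zero_div]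
    · have h1 := hI z hz z₀ hz₀mem
      have h2 : (1 - η * φ 0 * z) ^ s * (1 - η * φ z * z₀) ^ s
          = (1 - η * φ 0 * z₀) ^ s * (1 - η * φ z₀ * z) ^ s :=
        aux_pow_mul s (hbase z hz 0 h0mem) (hbase z₀ hz₀mem z hz)
          (hbase z₀ hz₀mem 0 h0mem) (hbase z hz z₀ hz₀mem) (hR z hz)
      have ha : ψ z₀ * (1 - η * φ 0 * z₀) ^ s / z₀ ^ n * z₀ ^ n
          = ψ z₀ * (1 - η * φ 0 * z₀) ^ s := div_mul_cancel₀ _ hz₀n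
      have hE : ψ z * z₀ ^ n * (1 - η * φ 0 * z) ^ s
          = ψ z₀ * (1 - η * φ 0 * z₀) ^ s * z ^ n := by
        apply mul_right_cancel₀ (hpne z hz z₀ hz₀mem)
        linear_combination (1 - η * φ 0 * z) ^ s * h1 + ψ z₀ * z ^ n * h2
      rw [eq_div_iff (hpne z hz 0 h0mem)]
      apply mul_right_cancel₀ hz₀n
      linear_combination hE - z ^ n * ha
  · -- φ form
    have hB' := hB z hz ((2:ℂ)⁻¹) hw₁
    have hden : (1 - η * φ 0 * z) ≠ 0 := hbne z hz 0 h0mem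
    have step : φ z * (1 - η * φ 0 * z)
        = φ 0 * (1 - η * φ 0 * z)
          + (η * (φ 0) ^ 2 + 2 * φ ((2:ℂ)⁻¹) - 2 * φ 0 - η * φ 0 * φ ((2:ℂ)⁻¹)) * z := by
      apply mul_left_cancel₀ hη0
      linear_combination (2 : ℂ) * hB'
    rw [show φ 0 + (η * (φ 0) ^ 2 + 2 * φ ((2:ℂ)⁻¹) - 2 * φ 0 - η * φ 0 * φ ((2:ℂ)⁻¹)) * z
          / (1 - η * φ 0 * z)
        = (φ 0 * (1 - η * φ 0 * z)
            + (η * (φ 0) ^ 2 + 2 * φ ((2:ℂ)⁻¹) - 2 * φ 0 - η * φ 0 * φ ((2:ℂ)⁻¹)) * z)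
          / (1 - η * φ 0 * z) by rw [add_div, mul_div_cancel_right₀ _ hden], eq_div_iff hden]
    exact step
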